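/- Let k be a field, V the 7-dimensional k-vector space with basis x_1,…,x_7, and R ⊆ V ⊗ V the 7-dimensional subspace spanned by the elements r_ℓ = Σ_{m,n=1}^7 ε^{ℓmn} x_m ⊗ x_n (ℓ = 1,…,7). Then the intersection (V ⊗ R) ∩ (R ⊗ V) inside V ⊗ V ⊗ V is one-dimensional, spanned by W = Σ_{i,j,k=1}^7 ε^{ijk} x_i ⊗ x_j ⊗ x_k; moreover W = Σ_{i=1}^7 x_i ⊗ r_i = Σ_{i=1}^7 r_i ⊗ x_i. -/

import Mathlib

/- The Fano-plane structure constants ε^{ijk}.  Indices `0,…,6` correspond to labels `1,…,7`,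
so the directed lines 123, 145, 167, 246, 275, 374, 365 become the triples below. -/
def fanoTriples : List (Fin 7 × Fin 7 × Fin 7) :=
  [(0, 1, 2), (0, 3, 4), (0, 5, 6), (1, 3, 5), (1, 6, 4), (2, 6, 3), (2, 5, 4)]

/-- All cyclic permutations of the directed Fano lines. -/
def fanoPlus : List (Fin 7 × Fin 7 × Fin 7) :=
  fanoTriples.flatMap fun t => [(t.1, t.2.1, t.2.2), (t.2.1, t.2.2, t.1), (t.2.2, t.1, t.2.1)]

/-- The totally antisymmetric symbol `ε^{ijk}`. -/
def eps (i j k : Fin 7) : ℤ :=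
  if (i, j, k) ∈ fanoPlus then 1 else if (j, i, k) ∈ fanoPlus then -1 else 0

open TensorProduct

/-- The 7-dimensional vector space `V` with basis `x_1, …, x_7`. -/
abbrev V7 (k : Type) [Field k] : Type := Fin 7 → k

/-- The basis vectors `x_i` of `V`. -/
noncomputable def xv (k : Type) [Field k] (i : Fin 7) : V7 k := Pi.single i 1

/-- The relation tensors `r_ℓ = Σ_{m,n} ε^{ℓmn} x_m ⊗ x_n ∈ V ⊗ V`. -/
noncomputable def rT (k : Type) [Field k] (ℓ : Fin 7) : V7 k ⊗[k] V7 k :=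
  ∑ m : Fin 7, ∑ n : Fin 7, ((eps ℓ m n : ℤ) : k) • (xv k m ⊗ₜ[k] xv k n)

/-- The 7-dimensional space of relations `R = span{r_1,…,r_7} ⊆ V ⊗ V`. -/
noncomputable def RT (k : Type) [Field k] : Submodule k (V7 k ⊗[k] V7 k) :=
  Submodule.span k (Set.range (rT k))

/-- The superpotential `W = Σ_{i,j,l} ε^{ijl} x_i ⊗ x_j ⊗ x_l ∈ V ⊗ V ⊗ V`. -/
noncomputable def WT (k : Type) [Field k] : V7 k ⊗[k] (V7 k ⊗[k] V7 k) :=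
  ∑ i : Fin 7, ∑ j : Fin 7, ∑ l : Fin 7,
    ((eps i j l : ℤ) : k) • (xv k i ⊗ₜ[k] (xv k j ⊗ₜ[k] xv k l))

/-- The subspace `V ⊗ R` of `V ⊗ V ⊗ V`. -/
noncomputable def VtensR (k : Type) [Field k] : Submodule k (V7 k ⊗[k] (V7 k ⊗[k] V7 k)) :=
  LinearMap.range (LinearMap.lTensor (V7 k) (RT k).subtype)

/-- The subspace `R ⊗ V` of `V ⊗ V ⊗ V` (transported along the associator). -/
noncomputable def RtensV (k : Type) [Field k] : Submodule k (V7 k ⊗[k] (V7 k ⊗[k] V7 k)) :=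
  LinearMap.range ((TensorProduct.assoc k (V7 k) (V7 k) (V7 k)).toLinearMap ∘ₗ
    LinearMap.rTensor (V7 k) (RT k).subtype)

variable (k : Type) [Field k]

noncomputable def pr (m : Fin 7) : V7 k →ₗ[k] k := LinearMap.proj m

noncomputable def E2 (n q : Fin 7) : V7 k ⊗[k] V7 k →ₗ[k] k :=
  TensorProduct.lift ((LinearMap.mul k k).compl₁₂ (pr k n) (pr k q))

noncomputable def E3 (m n q : Fin 7) : V7 k ⊗[k] (V7 k ⊗[k] V7 k) →ₗ[k] k :=
  TensorProduct.lift ((LinearMap.mul k k).compl₁₂ (pr k m) (E2 k n q))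

@[simp] lemma xv_apply (i m : Fin 7) : xv k i m = if m = i then 1 else 0 := by
  simp [xv, Pi.single_apply]

@[simp] lemma E2_tmul (n q : Fin 7) (v w : V7 k) : E2 k n q (v ⊗ₜ[k] w) = v n * w q := rfl

@[simp] lemma E3_tmul (m n q : Fin 7) (v : V7 k) (w : V7 k ⊗[k] V7 k) :
    E3 k m n q (v ⊗ₜ[k] w) = v m * E2 k n q w := rfl

@[simp] lemma E2_rT (n q l : Fin 7) : E2 k n q (rT k l) = ((eps l n q : ℤ) : k) := by
  simp [rT, Finset.mul_sum, mul_ite, ite_mul, Finset.sum_ite_eq, Finset.sum_ite_eq']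

@[simp] lemma E3_xv_rT (m n q i l : Fin 7) :
    E3 k m n q (xv k i ⊗ₜ[k] rT k l) = (if m = i then 1 else 0) * ((eps l n q : ℤ) : k) := by
  simp

lemma E3_assoc_rT_xv (m n q l p : Fin 7) :
    E3 k m n q ((TensorProduct.assoc k (V7 k) (V7 k) (V7 k)) (rT k l ⊗ₜ[k] xv k p)) =
      ((eps l m n : ℤ) : k) * (if q = p then 1 else 0) := by
  rw [show (TensorProduct.assoc k (V7 k) (V7 k) (V7 k)) (rT k l ⊗ₜ[k] xv k p)
      = (TensorProduct.assoc k (V7 k) (V7 k) (V7 k)).toLinearMap (rT k l ⊗ₜ[k] xv k p) from rfl]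
  simp [rT, sum_tmul, smul_tmul', assoc_tmul, Finset.mul_sum, mul_ite, ite_mul,
    Finset.sum_ite_eq, Finset.sum_ite_eq', mul_comm, mul_left_comm]

noncomputable def phi (i : Fin 7) : V7 k ⊗[k] (V7 k ⊗[k] V7 k) →ₗ[k] V7 k ⊗[k] V7 k :=
  TensorProduct.lift ((LinearMap.lsmul k (V7 k ⊗[k] V7 k)).comp (pr k i))

@[simp] lemma phi_tmul (i : Fin 7) (v : V7 k) (w : V7 k ⊗[k] V7 k) :
    phi k i (v ⊗ₜ[k] w) = v i • w := rfl

noncomputable def gmap (p : Fin 7) : V7 k ⊗[k] V7 k →ₗ[k] V7 k :=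
  TensorProduct.lift (((LinearMap.lsmul k (V7 k)).comp (pr k p)).flip)

@[simp] lemma gmap_tmul (p : Fin 7) (b c : V7 k) : gmap k p (b ⊗ₜ[k] c) = c p • b := rfl

noncomputable def psi (p : Fin 7) : V7 k ⊗[k] (V7 k ⊗[k] V7 k) →ₗ[k] V7 k ⊗[k] V7 k :=
  LinearMap.lTensor (V7 k) (gmap k p)

lemma sum_smul_xv (v : V7 k) : ∑ i : Fin 7, v i • xv k i = v := by
  funext j
  fin_cases j <;> simp [Finset.sum_apply, Fin.sum_univ_seven]

lemma recon1 (u : V7 k ⊗[k] (V7 k ⊗[k] V7 k)) :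
    u = ∑ i : Fin 7, xv k i ⊗ₜ[k] phi k i u := by
  induction u using TensorProduct.induction_on with
  | zero => simp only [LinearMap.map_zero, tmul_zero, Finset.sum_const_zero]
  | tmul v w =>
      simp only [phi_tmul]
      conv_lhs => rw [← sum_smul_xv k v]
      rw [sum_tmul]
      exact Finset.sum_congr rfl fun i _ => (smul_tmul _ _ _)
  | add x y hx hy =>
      simp only [LinearMap.map_add, tmul_add, Finset.sum_add_distrib]
      rw [← hx, ← hy]

noncomputable abbrev Amap : (V7 k ⊗[k] V7 k) ⊗[k] V7 k →ₗ[k] V7 k ⊗[k] (V7 k ⊗[k] V7 k) :=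
  (TensorProduct.assoc k (V7 k) (V7 k) (V7 k)).toLinearMap

lemma E3_Amap_rT_xv (m n q l p : Fin 7) :
    E3 k m n q (Amap k (rT k l ⊗ₜ[k] xv k p)) =
      ((eps l m n : ℤ) : k) * (if q = p then 1 else 0) := E3_assoc_rT_xv k m n q l p

lemma psi_A_tmul (p : Fin 7) (r : V7 k ⊗[k] V7 k) (v : V7 k) :
    psi k p (Amap k (r ⊗ₜ[k] v)) = v p • r := by
  induction r using TensorProduct.induction_on with
  | zero => rw [zero_tmul, LinearMap.map_zero, LinearMap.map_zero, smul_zero]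
  | tmul a b => simp [psi, Amap, assoc_tmul, tmul_smul, smul_tmul]
  | add x y hx hy => rw [add_tmul, map_add, map_add, hx, hy, smul_add]

lemma recon2 (z : (V7 k ⊗[k] V7 k) ⊗[k] V7 k) :
    ∑ p : Fin 7, (psi k p (Amap k z)) ⊗ₜ[k] xv k p = z := by
  induction z using TensorProduct.induction_on with
  | zero => simp only [LinearMap.map_zero, zero_tmul, Finset.sum_const_zero]
  | tmul r v =>
      simp only [psi_A_tmul]
      conv_rhs => rw [← sum_smul_xv k v]
      rw [tmul_sum]
      exact Finset.sum_congr rfl fun p _ => by rw [smul_tmul, tmul_smul]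
  | add x y hx hy =>
      simp only [LinearMap.map_add, add_tmul, Finset.sum_add_distrib, hx, hy]

lemma phi_mem {u : V7 k ⊗[k] (V7 k ⊗[k] V7 k)} (hu : u ∈ VtensR k) (i : Fin 7) :
    phi k i u ∈ RT k := by
  obtain ⟨w, rfl⟩ := hu
  induction w using TensorProduct.induction_on with
  | zero => rw [LinearMap.map_zero, LinearMap.map_zero]; exact Submodule.zero_mem _
  | tmul v s =>
      rw [LinearMap.lTensor_tmul, phi_tmul]
      exact Submodule.smul_mem _ _ s.2
  | add x y hx hy =>
      rw [LinearMap.map_add, LinearMap.map_add]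
      exact Submodule.add_mem _ hx hy

lemma psi_mem {u : V7 k ⊗[k] (V7 k ⊗[k] V7 k)} (hu : u ∈ RtensV k) (p : Fin 7) :
    psi k p u ∈ RT k := by
  obtain ⟨w, rfl⟩ := hu
  induction w using TensorProduct.induction_on with
  | zero => rw [LinearMap.map_zero, LinearMap.map_zero]; exact Submodule.zero_mem _
  | tmul s v =>
      show psi k p (Amap k ((s : V7 k ⊗[k] V7 k) ⊗ₜ[k] v)) ∈ RT k
      rw [psi_A_tmul]
      exact Submodule.smul_mem _ _ s.2
  | add x y hx hy =>
      rw [LinearMap.map_add, LinearMap.map_add]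
      exact Submodule.add_mem _ hx hy

lemma recon2' {u : V7 k ⊗[k] (V7 k ⊗[k] V7 k)} (hu : u ∈ RtensV k) :
    u = ∑ p : Fin 7, Amap k ((psi k p u) ⊗ₜ[k] xv k p) := by
  obtain ⟨w, rfl⟩ := hu
  have h := recon2 k (LinearMap.rTensor (V7 k) (RT k).subtype w)
  calc (((TensorProduct.assoc k (V7 k) (V7 k) (V7 k)).toLinearMap ∘ₗ
        LinearMap.rTensor (V7 k) (RT k).subtype) w)
      = Amap k (LinearMap.rTensor (V7 k) (RT k).subtype w) := rfl
    _ = Amap k (∑ p : Fin 7, (psi k p (Amap k (LinearMap.rTensor (V7 k) (RT k).subtype w))) ⊗ₜ[k] xv k p) := by rw [h]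
    _ = _ := by rw [_root_.map_sum]; exact Finset.sum_congr rfl fun p _ => rfl

lemma hW1 : WT k = ∑ i : Fin 7, xv k i ⊗ₜ[k] rT k i := by
  simp only [WT, rT, tmul_sum, tmul_smul]

def cycEquiv : (Fin 7 × Fin 7 × Fin 7) ≃ (Fin 7 × Fin 7 × Fin 7) where
  toFun t := (t.2.1, t.2.2, t.1)
  invFun t := (t.2.2, t.1, t.2.1)
  left_inv t := rfl
  right_inv t := rfl

lemma hW2 : WT k = Amap k (∑ i : Fin 7, rT k i ⊗ₜ[k] xv k i) := by
  have cyc : ∀ i j l : Fin 7, eps i j l = eps j l i := by decide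
  have key : ∀ i : Fin 7, Amap k (rT k i ⊗ₜ[k] xv k i) =
      ∑ m : Fin 7, ∑ n : Fin 7, ((eps i m n : ℤ) : k) • (xv k m ⊗ₜ[k] (xv k n ⊗ₜ[k] xv k i)) := by
    intro i
    simp only [rT, sum_tmul, smul_tmul', _root_.map_sum, LinearMap.map_smul, Amap,
      LinearEquiv.coe_coe, assoc_tmul]
  rw [_root_.map_sum]
  simp only [key]
  have lhs : WT k = ∑ t : Fin 7 × Fin 7 × Fin 7,
      ((eps t.1 t.2.1 t.2.2 : ℤ) : k) • (xv k t.1 ⊗ₜ[k] (xv k t.2.1 ⊗ₜ[k] xv k t.2.2)) := by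
    rw [WT]; simp only [Fintype.sum_prod_type]
  have rhs : (∑ i : Fin 7, ∑ m : Fin 7, ∑ n : Fin 7,
      ((eps i m n : ℤ) : k) • (xv k m ⊗ₜ[k] (xv k n ⊗ₜ[k] xv k i)))
      = ∑ t : Fin 7 × Fin 7 × Fin 7,
      ((eps t.1 t.2.1 t.2.2 : ℤ) : k) • (xv k t.2.1 ⊗ₜ[k] (xv k t.2.2 ⊗ₜ[k] xv k t.1)) := by
    simp only [Fintype.sum_prod_type]
  rw [lhs, rhs]
  exact Fintype.sum_equiv cycEquiv.symm _ _ (fun t => by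
    simp only [cycEquiv, Equiv.symm, Equiv.coe_fn_mk]
    rw [cyc t.2.2 t.1 t.2.1])

lemma epsK (i j l : Fin 7) : ((eps i j l : ℤ) : k) =
    if (i,j,l) ∈ fanoPlus then 1 else if (j,i,l) ∈ fanoPlus then -1 else 0 := by
  rw [eps]; split_ifs <;> simp

set_option maxHeartbeats 4000000 in
lemma main_inter {t : V7 k ⊗[k] (V7 k ⊗[k] V7 k)}
    (h1 : t ∈ VtensR k) (h2 : t ∈ RtensV k) :
    t ∈ Submodule.span k {WT k} := by
  choose c hc using fun i => (Submodule.mem_span_range_iff_exists_fun k).1 (phi_mem k h1 i)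
  choose d hd using fun p => (Submodule.mem_span_range_iff_exists_fun k).1 (psi_mem k h2 p)
  have ht1 : t = ∑ i : Fin 7, xv k i ⊗ₜ[k] (∑ l : Fin 7, c i l • rT k l) := by
    conv_lhs => rw [recon1 k t]
    exact Finset.sum_congr rfl fun i _ => by rw [hc i]
  have ht2 : t = ∑ p : Fin 7, Amap k ((∑ l : Fin 7, d p l • rT k l) ⊗ₜ[k] xv k p) := by
    conv_lhs => rw [recon2' k h2]
    exact Finset.sum_congr rfl fun p _ => by rw [hd p]
  have hA : ∀ m n q : Fin 7, E3 k m n q t = ∑ l : Fin 7, c m l * ((eps l n q : ℤ) : k) := by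
    intro m n q
    conv_lhs => rw [ht1]
    rw [_root_.map_sum]
    simp only [E3_tmul, _root_.map_sum, LinearMap.map_smul, E2_rT, smul_eq_mul, xv_apply,
      ite_mul, one_mul, zero_mul, Finset.mul_sum]
    rw [Finset.sum_comm]
    simp [Finset.sum_ite_eq]
  have hB : ∀ m n q : Fin 7, E3 k m n q t = ∑ l : Fin 7, d q l * ((eps l m n : ℤ) : k) := by
    intro m n q
    conv_lhs => rw [ht2]
    rw [_root_.map_sum]
    simp only [sum_tmul, smul_tmul', _root_.map_sum, LinearMap.map_smul, E3_assoc_rT_xv,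
      smul_eq_mul]
    simp only [← smul_tmul', LinearMap.map_smul, E3_assoc_rT_xv, smul_eq_mul]
    simp only [E3_Amap_rT_xv]
    simp only [mul_ite, mul_one, mul_zero]
    rw [Finset.sum_comm]
    simp [Finset.sum_ite_eq]
  have heq : ∀ m n q : Fin 7, (∑ l : Fin 7, c m l * ((eps l n q : ℤ) : k)) = ∑ l : Fin 7, d q l * ((eps l m n : ℤ) : k) := fun m n q => (hA m n q).symm.trans (hB m n q)
  clear hA hB hc hd h1 h2 ht2
  have e001 := heq 0 0 1
  simp only [Fin.sum_univ_seven, epsK] at e001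
  simp (config := { decide := true }) only [if_true, if_false] at e001
  have e002 := heq 0 0 2
  simp only [Fin.sum_univ_seven, epsK] at e002
  simp (config := { decide := true }) only [if_true, if_false] at e002
  have e003 := heq 0 0 3
  simp only [Fin.sum_univ_seven, epsK] at e003
  simp (config := { decide := true }) only [if_true, if_false] at e003
  have e004 := heq 0 0 4
  simp only [Fin.sum_univ_seven, epsK] at e004
  simp (config := { decide := true }) only [if_true, if_false] at e004
  have e005 := heq 0 0 5
  simp only [Fin.sum_univ_seven, epsK] at e005
  simp (config := { decide := true }) only [if_true, if_false] at e005
  have e006 := heq 0 0 6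
  simp only [Fin.sum_univ_seven, epsK] at e006
  simp (config := { decide := true }) only [if_true, if_false] at e006
  have e012 := heq 0 1 2
  simp only [Fin.sum_univ_seven, epsK] at e012
  simp (config := { decide := true }) only [if_true, if_false] at e012
  have e034 := heq 0 3 4
  simp only [Fin.sum_univ_seven, epsK] at e034
  simp (config := { decide := true }) only [if_true, if_false] at e034
  have e056 := heq 0 5 6
  simp only [Fin.sum_univ_seven, epsK] at e056
  simp (config := { decide := true }) only [if_true, if_false] at e056
  have e110 := heq 1 1 0
  simp only [Fin.sum_univ_seven, epsK] at e110
  simp (config := { decide := true }) only [if_true, if_false] at e110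
  have e112 := heq 1 1 2
  simp only [Fin.sum_univ_seven, epsK] at e112
  simp (config := { decide := true }) only [if_true, if_false] at e112
  have e113 := heq 1 1 3
  simp only [Fin.sum_univ_seven, epsK] at e113
  simp (config := { decide := true }) only [if_true, if_false] at e113
  have e114 := heq 1 1 4
  simp only [Fin.sum_univ_seven, epsK] at e114
  simp (config := { decide := true }) only [if_true, if_false] at e114
  have e115 := heq 1 1 5
  simp only [Fin.sum_univ_seven, epsK] at e115
  simp (config := { decide := true }) only [if_true, if_false] at e115
  have e116 := heq 1 1 6
  simp only [Fin.sum_univ_seven, epsK] at e116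
  simp (config := { decide := true }) only [if_true, if_false] at e116
  have e164 := heq 1 6 4
  simp only [Fin.sum_univ_seven, epsK] at e164
  simp (config := { decide := true }) only [if_true, if_false] at e164
  have e220 := heq 2 2 0
  simp only [Fin.sum_univ_seven, epsK] at e220
  simp (config := { decide := true }) only [if_true, if_false] at e220
  have e221 := heq 2 2 1
  simp only [Fin.sum_univ_seven, epsK] at e221
  simp (config := { decide := true }) only [if_true, if_false] at e221
  have e223 := heq 2 2 3
  simp only [Fin.sum_univ_seven, epsK] at e223
  simp (config := { decide := true }) only [if_true, if_false] at e223
  have e224 := heq 2 2 4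
  simp only [Fin.sum_univ_seven, epsK] at e224
  simp (config := { decide := true }) only [if_true, if_false] at e224
  have e225 := heq 2 2 5
  simp only [Fin.sum_univ_seven, epsK] at e225
  simp (config := { decide := true }) only [if_true, if_false] at e225
  have e226 := heq 2 2 6
  simp only [Fin.sum_univ_seven, epsK] at e226
  simp (config := { decide := true }) only [if_true, if_false] at e226
  have e254 := heq 2 5 4
  simp only [Fin.sum_univ_seven, epsK] at e254
  simp (config := { decide := true }) only [if_true, if_false] at e254
  have e326 := heq 3 2 6
  simp only [Fin.sum_univ_seven, epsK] at e326
  simp (config := { decide := true }) only [if_true, if_false] at e326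
  have e330 := heq 3 3 0
  simp only [Fin.sum_univ_seven, epsK] at e330
  simp (config := { decide := true }) only [if_true, if_false] at e330
  have e331 := heq 3 3 1
  simp only [Fin.sum_univ_seven, epsK] at e331
  simp (config := { decide := true }) only [if_true, if_false] at e331
  have e332 := heq 3 3 2
  simp only [Fin.sum_univ_seven, epsK] at e332
  simp (config := { decide := true }) only [if_true, if_false] at e332
  have e334 := heq 3 3 4
  simp only [Fin.sum_univ_seven, epsK] at e334
  simp (config := { decide := true }) only [if_true, if_false] at e334
  have e335 := heq 3 3 5
  simp only [Fin.sum_univ_seven, epsK] at e335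
  simp (config := { decide := true }) only [if_true, if_false] at e335
  have e336 := heq 3 3 6
  simp only [Fin.sum_univ_seven, epsK] at e336
  simp (config := { decide := true }) only [if_true, if_false] at e336
  have e416 := heq 4 1 6
  simp only [Fin.sum_univ_seven, epsK] at e416
  simp (config := { decide := true }) only [if_true, if_false] at e416
  have e440 := heq 4 4 0
  simp only [Fin.sum_univ_seven, epsK] at e440
  simp (config := { decide := true }) only [if_true, if_false] at e440
  have e441 := heq 4 4 1
  simp only [Fin.sum_univ_seven, epsK] at e441
  simp (config := { decide := true }) only [if_true, if_false] at e441
  have e442 := heq 4 4 2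
  simp only [Fin.sum_univ_seven, epsK] at e442
  simp (config := { decide := true }) only [if_true, if_false] at e442
  have e443 := heq 4 4 3
  simp only [Fin.sum_univ_seven, epsK] at e443
  simp (config := { decide := true }) only [if_true, if_false] at e443
  have e445 := heq 4 4 5
  simp only [Fin.sum_univ_seven, epsK] at e445
  simp (config := { decide := true }) only [if_true, if_false] at e445
  have e446 := heq 4 4 6
  simp only [Fin.sum_univ_seven, epsK] at e446
  simp (config := { decide := true }) only [if_true, if_false] at e446
  have e542 := heq 5 4 2
  simp only [Fin.sum_univ_seven, epsK] at e542
  simp (config := { decide := true }) only [if_true, if_false] at e542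
  have e550 := heq 5 5 0
  simp only [Fin.sum_univ_seven, epsK] at e550
  simp (config := { decide := true }) only [if_true, if_false] at e550
  have e551 := heq 5 5 1
  simp only [Fin.sum_univ_seven, epsK] at e551
  simp (config := { decide := true }) only [if_true, if_false] at e551
  have e552 := heq 5 5 2
  simp only [Fin.sum_univ_seven, epsK] at e552
  simp (config := { decide := true }) only [if_true, if_false] at e552
  have e553 := heq 5 5 3
  simp only [Fin.sum_univ_seven, epsK] at e553
  simp (config := { decide := true }) only [if_true, if_false] at e553
  have e554 := heq 5 5 4
  simp only [Fin.sum_univ_seven, epsK] at e554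
  simp (config := { decide := true }) only [if_true, if_false] at e554
  have e556 := heq 5 5 6
  simp only [Fin.sum_univ_seven, epsK] at e556
  simp (config := { decide := true }) only [if_true, if_false] at e556
  have e632 := heq 6 3 2
  simp only [Fin.sum_univ_seven, epsK] at e632
  simp (config := { decide := true }) only [if_true, if_false] at e632
  have e660 := heq 6 6 0
  simp only [Fin.sum_univ_seven, epsK] at e660
  simp (config := { decide := true }) only [if_true, if_false] at e660
  have e661 := heq 6 6 1
  simp only [Fin.sum_univ_seven, epsK] at e661
  simp (config := { decide := true }) only [if_true, if_false] at e661
  have e662 := heq 6 6 2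
  simp only [Fin.sum_univ_seven, epsK] at e662
  simp (config := { decide := true }) only [if_true, if_false] at e662
  have e663 := heq 6 6 3
  simp only [Fin.sum_univ_seven, epsK] at e663
  simp (config := { decide := true }) only [if_true, if_false] at e663
  have e664 := heq 6 6 4
  simp only [Fin.sum_univ_seven, epsK] at e664
  simp (config := { decide := true }) only [if_true, if_false] at e664
  have e665 := heq 6 6 5
  simp only [Fin.sum_univ_seven, epsK] at e665
  simp (config := { decide := true }) only [if_true, if_false] at e665
  have OD01 : c 0 1 = 0 := by linear_combination -e002
  have OD02 : c 0 2 = 0 := by linear_combination e001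
  have OD03 : c 0 3 = 0 := by linear_combination -e004
  have OD04 : c 0 4 = 0 := by linear_combination e003
  have OD05 : c 0 5 = 0 := by linear_combination -e006
  have OD06 : c 0 6 = 0 := by linear_combination e005
  have OD10 : c 1 0 = 0 := by linear_combination e112
  have OD12 : c 1 2 = 0 := by linear_combination -e110
  have OD13 : c 1 3 = 0 := by linear_combination -e115
  have OD14 : c 1 4 = 0 := by linear_combination e116
  have OD15 : c 1 5 = 0 := by linear_combination e113
  have OD16 : c 1 6 = 0 := by linear_combination -e114
  have OD20 : c 2 0 = 0 := by linear_combination -e221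
  have OD21 : c 2 1 = 0 := by linear_combination e220
  have OD23 : c 2 3 = 0 := by linear_combination e226
  have OD24 : c 2 4 = 0 := by linear_combination e225
  have OD25 : c 2 5 = 0 := by linear_combination -e224
  have OD26 : c 2 6 = 0 := by linear_combination -e223
  have OD30 : c 3 0 = 0 := by linear_combination e334
  have OD31 : c 3 1 = 0 := by linear_combination e335
  have OD32 : c 3 2 = 0 := by linear_combination -e336
  have OD34 : c 3 4 = 0 := by linear_combination -e330
  have OD35 : c 3 5 = 0 := by linear_combination -e331
  have OD36 : c 3 6 = 0 := by linear_combination e332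
  have OD40 : c 4 0 = 0 := by linear_combination -e443
  have OD41 : c 4 1 = 0 := by linear_combination -e446
  have OD42 : c 4 2 = 0 := by linear_combination -e445
  have OD43 : c 4 3 = 0 := by linear_combination e440
  have OD45 : c 4 5 = 0 := by linear_combination e442
  have OD46 : c 4 6 = 0 := by linear_combination e441
  have OD50 : c 5 0 = 0 := by linear_combination e556
  have OD51 : c 5 1 = 0 := by linear_combination -e553
  have OD52 : c 5 2 = 0 := by linear_combination e554
  have OD53 : c 5 3 = 0 := by linear_combination e551
  have OD54 : c 5 4 = 0 := by linear_combination -e552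
  have OD56 : c 5 6 = 0 := by linear_combination -e550
  have OD60 : c 6 0 = 0 := by linear_combination -e665
  have OD61 : c 6 1 = 0 := by linear_combination e664
  have OD62 : c 6 2 = 0 := by linear_combination e663
  have OD63 : c 6 3 = 0 := by linear_combination -e662
  have OD64 : c 6 4 = 0 := by linear_combination -e661
  have OD65 : c 6 5 = 0 := by linear_combination e660
  have D1 : c 1 1 = c 0 0 := by linear_combination e164 - e034
  have D2 : c 2 2 = c 0 0 := by linear_combination e254 - e034
  have D3 : c 3 3 = c 0 0 := by linear_combination e326 - e056
  have D4 : c 4 4 = c 0 0 := by linear_combination e416 - e056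
  have D5 : c 5 5 = c 0 0 := by linear_combination e542 - e012
  have D6 : c 6 6 = c 0 0 := by linear_combination e632 - e012
  have hs0 : (∑ l : Fin 7, c 0 l • rT k l) = c 0 0 • rT k 0 := by
    rw [Fin.sum_univ_seven, OD01, OD02, OD03, OD04, OD05, OD06]; simp
  have hs1 : (∑ l : Fin 7, c 1 l • rT k l) = c 0 0 • rT k 1 := by
    rw [Fin.sum_univ_seven, OD10, D1, OD12, OD13, OD14, OD15, OD16]; simp
  have hs2 : (∑ l : Fin 7, c 2 l • rT k l) = c 0 0 • rT k 2 := by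
    rw [Fin.sum_univ_seven, OD20, OD21, D2, OD23, OD24, OD25, OD26]; simp
  have hs3 : (∑ l : Fin 7, c 3 l • rT k l) = c 0 0 • rT k 3 := by
    rw [Fin.sum_univ_seven, OD30, OD31, OD32, D3, OD34, OD35, OD36]; simp
  have hs4 : (∑ l : Fin 7, c 4 l • rT k l) = c 0 0 • rT k 4 := by
    rw [Fin.sum_univ_seven, OD40, OD41, OD42, OD43, D4, OD45, OD46]; simp
  have hs5 : (∑ l : Fin 7, c 5 l • rT k l) = c 0 0 • rT k 5 := by
    rw [Fin.sum_univ_seven, OD50, OD51, OD52, OD53, OD54, D5, OD56]; simp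
  have hs6 : (∑ l : Fin 7, c 6 l • rT k l) = c 0 0 • rT k 6 := by
    rw [Fin.sum_univ_seven, OD60, OD61, OD62, OD63, OD64, OD65, D6]; simp
  have ht : t = c 0 0 • WT k := by
    rw [ht1, Fin.sum_univ_seven, hs0, hs1, hs2, hs3, hs4, hs5, hs6, hW1 k, Fin.sum_univ_seven]
    simp only [tmul_smul, smul_add]
  exact Submodule.mem_span_singleton.2 ⟨c 0 0, ht.symm⟩


lemma E3_W (m n q : Fin 7) : E3 k m n q (WT k) = ((eps m n q : ℤ) : k) := by
  rw [hW1, _root_.map_sum]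
  simp only [E3_xv_rT, ite_mul, one_mul, zero_mul]
  rw [Finset.sum_ite_eq]
  simp

lemma W_ne : WT k ≠ 0 := by
  intro h
  have h2 := congrArg (E3 k 0 1 2) h
  rw [LinearMap.map_zero, E3_W, show eps (0 : Fin 7) 1 2 = 1 by decide] at h2
  rw [Int.cast_one] at h2
  exact one_ne_zero h2

lemma W_mem1 : WT k ∈ VtensR k := by
  rw [hW1]
  refine Submodule.sum_mem _ fun i _ => ?_
  exact ⟨xv k i ⊗ₜ[k] (⟨rT k i, Submodule.subset_span ⟨i, rfl⟩⟩ : RT k),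
    by rw [LinearMap.lTensor_tmul]; rfl⟩

lemma W_mem2 : WT k ∈ RtensV k := by
  rw [hW2, _root_.map_sum]
  refine Submodule.sum_mem _ fun i _ => ?_
  exact ⟨(⟨rT k i, Submodule.subset_span ⟨i, rfl⟩⟩ : RT k) ⊗ₜ[k] xv k i,
    by rw [LinearMap.comp_apply, LinearMap.rTensor_tmul]; rfl⟩

/-- STATEMENT 8: `(V ⊗ R) ∩ (R ⊗ V)` is one-dimensional, spanned by the superpotential
`W`; moreover `W = Σ_i x_i ⊗ r_i = Σ_i r_i ⊗ x_i`. -/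
theorem superpotential_spans_intersection (k : Type) [Field k] :
    VtensR k ⊓ RtensV k = Submodule.span k {WT k} ∧
    WT k ≠ 0 ∧
    WT k = ∑ i : Fin 7, xv k i ⊗ₜ[k] rT k i ∧
    WT k = (TensorProduct.assoc k (V7 k) (V7 k) (V7 k))
      (∑ i : Fin 7, rT k i ⊗ₜ[k] xv k i) := by
  refine ⟨le_antisymm (fun t ht => main_inter k ht.1 ht.2) ?_, W_ne k, hW1 k, hW2 k⟩
  rw [Submodule.span_le, Set.singleton_subset_iff]
  exact ⟨W_mem1 k, W_mem2 k⟩
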